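/- Under the i.i.d. sampling assumption and the feasibility assumption μ_τ({1,…,k}) > 1−α, Algorithm 1's prediction sets are asymptotically valid: liminf_{n→∞} P( {J^{(n)} ≠ NA} and max_{ŷ ∈ C^{(n)}(X^test)} IoU(Y^test, ŷ) > τ ) ≥ 1 − α, where C^{(n)}(X^test) = {f(X^test, j) : j ∈ J^{(n)}} on the event {J^{(n)} ≠ NA}. -/

import Mathlib

open MeasureTheory ProbabilityTheory Filter
open scoped Classical Topology

/-- A binary mask on a `W × H` grid: `true` encodes the value 1. -/
abbrev Mask (W H : ℕ) := Fin W × Fin H → Bool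

/-- Intersection-over-Union of two binary masks, with the convention
`IoU A B = 1` when the union is empty. -/
noncomputable def IoU {W H : ℕ} (A B : Mask W H) : ℝ :=
  if (Finset.univ.filter (fun p : Fin W × Fin H => A p = true ∨ B p = true)).card = 0 then 1
  else ((Finset.univ.filter (fun p : Fin W × Fin H => A p = true ∧ B p = true)).card : ℝ) /
    ((Finset.univ.filter (fun p : Fin W × Fin H => A p = true ∨ B p = true)).card : ℝ)

variable {𝒳 : Type*} [MeasurableSpace 𝒳] {W H k : ℕ}

/-- `μ_τ(J)`: the probability under the law `P` that some parameter index `j ∈ J`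
produces a mask with `IoU` exceeding `τ` against the true mask. -/
noncomputable def muTau (P : Measure (𝒳 × Mask W H)) (f : 𝒳 → Fin k → Mask W H)
    (τ : ℝ) (J : Finset (Fin k)) : ENNReal :=
  P {p | ∃ j ∈ J, τ < IoU p.2 (f p.1 j)}

/-- `Covers Z f α τ n ω J` says that the parameter set `J` covers at least a
`(1−α)` fraction of the first `n` calibration samples `Z 1 ω, …, Z n ω`:
`|⋃_{j ∈ J} S_j^{(n)}| ≥ (1−α)·n`. -/
def Covers (Z : ℕ → Ω → 𝒳 × Mask W H) (f : 𝒳 → Fin k → Mask W H) (α τ : ℝ)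
    (n : ℕ) (ω : Ω) (J : Finset (Fin k)) : Prop :=
  (1 - α) * n ≤ (((Finset.Icc 1 n).filter
    (fun i => ∃ j ∈ J, τ < IoU (Z i ω).2 (f (Z i ω).1 j))).card : ℝ)

/-- Under i.i.d. sampling and the feasibility assumption
`μ_τ({1,…,k}) > 1−α`, Algorithm 1's prediction sets are asymptotically valid:
`liminf_n P(J^{(n)} ≠ NA and max_{ŷ ∈ C^{(n)}(X^test)} IoU(Y^test, ŷ) > τ) ≥ 1 − α`,
where `C^{(n)}(X^test) = {f(X^test, j) : j ∈ J^{(n)}}` and the test point is `Z 0`. -/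
lemma aux_exists_least {β : Type*} [Fintype β] (lt : β → β → Prop)
    (h : IsStrictTotalOrder β lt) (p : β → Prop) (hp : ∃ b, p b) :
    ∃ b, p b ∧ ∀ b', p b' → b = b' ∨ lt b b' := by
  classical
  letI := h
  letI : LinearOrder β := linearOrderOfSTO lt
  obtain ⟨b0, hb0⟩ := hp
  obtain ⟨b, hb, hmin⟩ := (Finset.univ.filter p).exists_min_image id
    ⟨b0, by simp [hb0]⟩
  refine ⟨b, (Finset.mem_filter.mp hb).2, fun b' hb' => ?_⟩
  exact hmin b' (by simp [hb'])

lemma aux_measure_tendsto_zero {Ω : Type*} [MeasurableSpace Ω] (Pr : Measure Ω)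
    [IsProbabilityMeasure Pr] {C : ℕ → Set Ω} (hC : ∀ n, MeasurableSet (C n))
    (h : ∀ᵐ ω ∂Pr, ∀ᶠ n in atTop, ω ∉ C n) :
    Tendsto (fun n => Pr (C n)) atTop (𝓝 0) := by
  set D : ℕ → Set Ω := fun n => ⋃ m ∈ Set.Ici n, C m with hD
  have hDm : ∀ n, MeasurableSet (D n) :=
    fun n => MeasurableSet.biUnion (Set.to_countable _) (fun m _ => hC m)
  have hanti : Antitone D := fun n n' hnn' =>
    Set.biUnion_subset_biUnion_left (Set.Ici_subset_Ici.mpr hnn')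
  have hiInter : Pr (⋂ n, D n) = 0 := by
    have hnull : Pr {ω | ¬ ∀ᶠ n in atTop, ω ∉ C n} = 0 := by
      simpa [ae_iff] using h
    refine measure_mono_null (fun ω hω => ?_) hnull
    simp only [Set.mem_iInter, hD, Set.mem_iUnion, Set.mem_Ici] at hω
    simp only [Set.mem_setOf_eq, Filter.eventually_atTop, not_exists, not_forall]
    intro N
    obtain ⟨m, hm, hmem⟩ := hω N
    exact ⟨m, hm, by simpa using hmem⟩
  have htend : Tendsto (fun n => Pr (D n)) atTop (𝓝 0) := by
    have := tendsto_measure_iInter_atTop (μ := Pr)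
      (fun n => (hDm n).nullMeasurableSet) hanti ⟨0, measure_ne_top _ _⟩
    rwa [hiInter] at this
  refine tendsto_of_tendsto_of_tendsto_of_le_of_le tendsto_const_nhds htend
    (fun n => zero_le) (fun n => measure_mono ?_)
  exact fun ω hω => Set.mem_biUnion (Set.mem_Ici.mpr le_rfl) hω


theorem algorithm1_asymptotic_validity
    (hk : 1 ≤ k) {Ω : Type*} [MeasurableSpace Ω]
    (Pr : Measure Ω) [IsProbabilityMeasure Pr]
    (P : Measure (𝒳 × Mask W H)) [IsProbabilityMeasure P]
    (f : 𝒳 → Fin k → Mask W H) (hf : ∀ j, Measurable (fun x => f x j))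
    (α τ : ℝ) (hα : α ∈ Set.Ioo (0:ℝ) 1) (hτ : τ ∈ Set.Ioo (0:ℝ) 1)
    (Z : ℕ → Ω → 𝒳 × Mask W H) (hZmeas : ∀ i, Measurable (Z i))
    (hindep : iIndepFun Z Pr)
    (hlaw : ∀ i, Measure.map (Z i) Pr = P)
    (hfeas : ENNReal.ofReal (1 - α) < muTau P f τ (Finset.univ : Finset (Fin k)))
    (lt : Finset (Fin k) → Finset (Fin k) → Prop)
    (hlto : IsStrictTotalOrder (Finset (Fin k)) lt)
    (hltcard : ∀ J J' : Finset (Fin k), J.card < J'.card → lt J J')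
    (Jn : ℕ → Ω → Option (Finset (Fin k)))
    (hJn : ∀ (n : ℕ) (ω : Ω) (J : Finset (Fin k)), Jn n ω = some J ↔
      (Covers Z f α τ n ω J ∧
        ∀ J' : Finset (Fin k), Covers Z f α τ n ω J' → J = J' ∨ lt J J')) :
    1 - α ≤ liminf (fun n : ℕ =>
        (Pr {ω | ∃ J, Jn n ω = some J ∧
          ∃ j ∈ J, τ < IoU (Z 0 ω).2 (f (Z 0 ω).1 j)}).toReal) atTop := by
  classical
  obtain ⟨hα0, hα1⟩ := hα
  -- The relevant measurable sets in the sample space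
  set A : Finset (Fin k) → Set (𝒳 × Mask W H) :=
    fun J => {p | ∃ j ∈ J, τ < IoU p.2 (f p.1 j)} with hA
  have hmeasA : ∀ J, MeasurableSet (A J) := by
    intro J
    have h1 : ∀ j : Fin k, MeasurableSet {p : 𝒳 × Mask W H | τ < IoU p.2 (f p.1 j)} := by
      intro j
      have : {p : 𝒳 × Mask W H | τ < IoU p.2 (f p.1 j)} =
          ⋃ m : Mask W H, ((fun x => f x j) ⁻¹' {y | τ < IoU m y}) ×ˢ ({m} : Set (Mask W H)) := by
        ext ⟨x, y⟩
        simp only [Set.mem_setOf_eq, Set.mem_iUnion, Set.mem_prod, Set.mem_preimage,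
          Set.mem_singleton_iff]
        constructor
        · intro hxy; exact ⟨y, hxy, rfl⟩
        · rintro ⟨m, hm, rfl⟩; exact hm
      rw [this]
      exact MeasurableSet.iUnion fun m =>
        ((hf j) (Set.Finite.measurableSet (Set.toFinite _))).prod
          (Set.Finite.measurableSet (Set.toFinite _))
    have : A J = ⋃ j ∈ J, {p : 𝒳 × Mask W H | τ < IoU p.2 (f p.1 j)} := by
      ext p; simp [hA]
    rw [this]
    exact MeasurableSet.biUnion (Set.to_countable _) fun j _ => h1 j
  -- indicator functions and empirical counts
  set g : Finset (Fin k) → (𝒳 × Mask W H) → ℝ := fun J => (A J).indicator 1 with hgdef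
  have hg : ∀ J, Measurable (g J) := fun J => measurable_one.indicator (hmeasA J)
  set N : Finset (Fin k) → ℕ → Ω → ℝ :=
    fun J n ω => ∑ i ∈ Finset.Icc 1 n, g J (Z i ω) with hNdef
  have hNmeas : ∀ J n, Measurable (N J n) := fun J n =>
    Finset.measurable_sum _ fun i _ => (hg J).comp (hZmeas i)
  have hcard : ∀ (J : Finset (Fin k)) n ω,
      (((Finset.Icc 1 n).filter
        (fun i => ∃ j ∈ J, τ < IoU (Z i ω).2 (f (Z i ω).1 j))).card : ℝ) = N J n ω := by
    intro J n ω
    rw [Finset.card_filter]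
    push_cast
    refine Finset.sum_congr rfl fun i _ => ?_
    by_cases h : Z i ω ∈ A J
    · have h' : ∃ j ∈ J, τ < IoU (Z i ω).2 (f (Z i ω).1 j) := h
      simp [hgdef, Set.indicator_apply, h, h']
    · have h' : ¬ ∃ j ∈ J, τ < IoU (Z i ω).2 (f (Z i ω).1 j) := h
      simp [hgdef, Set.indicator_apply, h, h']
  have hCovers : ∀ (J : Finset (Fin k)) n ω,
      Covers Z f α τ n ω J ↔ (1 - α) * n ≤ N J n ω := by
    intro J n ω
    unfold Covers
    rw [hcard]
  have mCovers : ∀ (J : Finset (Fin k)) n,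
      MeasurableSet {ω | Covers Z f α τ n ω J} := by
    intro J n
    have : {ω | Covers Z f α τ n ω J} = {ω | (1 - α) * n ≤ N J n ω} := by
      ext ω; exact hCovers J n ω
    rw [this]
    exact measurableSet_le measurable_const (hNmeas J n)
  -- strong law of large numbers for each J
  have hSLLN : ∀ J : Finset (Fin k), ∀ᵐ ω ∂Pr,
      Tendsto (fun n : ℕ => N J n ω / n) atTop (𝓝 ((P (A J)).toReal)) := by
    intro J
    set X : ℕ → Ω → ℝ := fun i ω => g J (Z (i + 1) ω) with hX
    have hXmeas : ∀ i, Measurable (X i) := fun i => (hg J).comp (hZmeas _)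
    have hintP : Integrable (g J) P := by
      have : Integrable ((A J).indicator (fun _ => (1:ℝ))) P :=
        (integrable_const (1:ℝ)).indicator (hmeasA J)
      exact this
    have hint : Integrable (X 0) Pr := by
      have h1 : Integrable (g J) (Measure.map (Z 1) Pr) := by rw [hlaw 1]; exact hintP
      have := (integrable_map_measure h1.aestronglyMeasurable
        (hZmeas 1).aemeasurable).mp h1
      simpa [hX, Function.comp_def] using this
    have hindep' : Pairwise (Function.onFun (IndepFun · · Pr) X) := by
      intro i j hij
      exact ((hindep.indepFun (show i + 1 ≠ j + 1 by omega)).comp (hg J) (hg J))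
    have hident : ∀ i, IdentDistrib (X i) (X 0) Pr Pr := by
      intro i
      have hZi : IdentDistrib (Z (i + 1)) (Z 1) Pr Pr :=
        ⟨(hZmeas _).aemeasurable, (hZmeas _).aemeasurable, by rw [hlaw, hlaw]⟩
      exact hZi.comp (hg J)
    have hmean : Pr[X 0] = (P (A J)).toReal := by
      have : Pr[X 0] = ∫ p, g J p ∂(Measure.map (Z 1) Pr) := by
        rw [integral_map (hZmeas 1).aemeasurable (hg J).aestronglyMeasurable]
      rw [this, hlaw 1]
      simpa [hgdef, Measure.real] using integral_indicator_one (μ := P) (hmeasA J)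
    have hlln := strong_law_ae_real X hint hindep' hident
    rw [hmean] at hlln
    filter_upwards [hlln] with ω hω
    have hsum : ∀ n : ℕ, N J n ω = ∑ i ∈ Finset.range n, X i ω := by
      intro n
      rw [hNdef]
      simp only
      rw [← Finset.Ico_add_one_right_eq_Icc, Finset.sum_Ico_eq_sum_range]
      simp [hX, Nat.add_comm]
    simpa [hsum] using hω
  -- probability that a "bad" J covers tends to zero
  have hbad : ∀ J : Finset (Fin k), (P (A J)).toReal < 1 - α →
      Tendsto (fun n => Pr {ω | Covers Z f α τ n ω J}) atTop (𝓝 0) := by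
    intro J hJ
    refine aux_measure_tendsto_zero Pr (fun n => mCovers J n) ?_
    filter_upwards [hSLLN J] with ω hω
    filter_upwards [hω.eventually_lt_const hJ, eventually_ge_atTop 1] with n hn hn1
    intro hc
    have hc' : (1 - α) * n ≤ N J n ω := (hCovers J n ω).mp hc
    have hnpos : (0:ℝ) < n := by exact_mod_cast hn1
    have := (div_lt_iff₀ hnpos).mp hn
    linarith
  -- probability that univ fails to cover tends to zero
  have hunivgt : 1 - α < (P (A Finset.univ)).toReal := by
    have h1 : muTau P f τ (Finset.univ : Finset (Fin k)) = P (A Finset.univ) := rfl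
    rw [h1] at hfeas
    have := ENNReal.toReal_strict_mono (measure_ne_top P _) hfeas
    rwa [ENNReal.toReal_ofReal (by linarith)] at this
  have hgood : Tendsto (fun n => Pr {ω | ¬ Covers Z f α τ n ω Finset.univ}) atTop (𝓝 0) := by
    refine aux_measure_tendsto_zero Pr
      (fun n => (mCovers Finset.univ n).compl) ?_
    filter_upwards [hSLLN Finset.univ] with ω hω
    filter_upwards [hω.eventually_const_lt hunivgt, eventually_ge_atTop 1] with n hn hn1
    intro hc
    refine hc ((hCovers _ n ω).mpr ?_)
    have hnpos : (0:ℝ) < n := by exact_mod_cast hn1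
    have := (lt_div_iff₀ hnpos).mp hn
    linarith
  -- measurability of the algorithm-output events
  have hmJn : ∀ (n : ℕ) (J : Finset (Fin k)), MeasurableSet {ω | Jn n ω = some J} := by
    intro n J
    have heq : {ω | Jn n ω = some J} = {ω | Covers Z f α τ n ω J} ∩
        ⋂ J' : Finset (Fin k), {ω | Covers Z f α τ n ω J' → (J = J' ∨ lt J J')} := by
      ext ω
      simp only [Set.mem_setOf_eq, Set.mem_inter_iff, Set.mem_iInter, hJn n ω J]
    rw [heq]
    refine (mCovers J n).inter (MeasurableSet.iInter fun J' => ?_)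
    by_cases hc : J = J' ∨ lt J J'
    · have : {ω | Covers Z f α τ n ω J' → (J = J' ∨ lt J J')} = Set.univ := by
        ext ω; simp [hc]
      rw [this]; exact MeasurableSet.univ
    · have : {ω | Covers Z f α τ n ω J' → (J = J' ∨ lt J J')} =
          {ω | Covers Z f α τ n ω J'}ᶜ := by
        ext ω; simp [hc]
      rw [this]; exact (mCovers J' n).compl
  have hmZ0 : ∀ J : Finset (Fin k), MeasurableSet {ω | Z 0 ω ∈ A J} :=
    fun J => (hZmeas 0) (hmeasA J)
  -- independence of the test point and the algorithm's output
  have hindepJ : ∀ (n : ℕ) (J : Finset (Fin k)),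
      Pr ({ω | Z 0 ω ∈ A J} ∩ {ω | Jn n ω = some J}) =
        P (A J) * Pr {ω | Jn n ω = some J} := by
    intro n J
    set S : Finset ℕ := {0} with hS
    set T : Finset ℕ := Finset.Icc 1 n with hT
    have hST : Disjoint S T := by
      simp only [hS, hT, Finset.disjoint_left, Finset.mem_singleton]
      rintro a rfl
      simp
    have hIF := hindep.indepFun_finset S T hST hZmeas
    set BS : Set (↥S → 𝒳 × Mask W H) := {u | u ⟨0, by simp [hS]⟩ ∈ A J} with hBS
    set ψ : (↥T → 𝒳 × Mask W H) → Finset (Fin k) → Prop :=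
      fun v J' => (1 - α) * n ≤ ∑ i : ↥T, g J' (v i) with hψ
    set BT : Set (↥T → 𝒳 × Mask W H) :=
      {v | ψ v J ∧ ∀ J', ψ v J' → (J = J' ∨ lt J J')} with hBT
    have hmBS : MeasurableSet BS := (measurable_pi_apply _) (hmeasA J)
    have hmψ : ∀ J' : Finset (Fin k), MeasurableSet {v | ψ v J'} := fun J' =>
      measurableSet_le measurable_const
        (Finset.measurable_sum _ fun i _ => (hg J').comp (measurable_pi_apply i))
    have hmBT : MeasurableSet BT := by
      have heq : BT = {v | ψ v J} ∩ ⋂ J' : Finset (Fin k),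
          {v | ψ v J' → (J = J' ∨ lt J J')} := by
        ext v
        simp only [hBT, Set.mem_setOf_eq, Set.mem_inter_iff, Set.mem_iInter]
      rw [heq]
      refine (hmψ J).inter (MeasurableSet.iInter fun J' => ?_)
      by_cases hc : J = J' ∨ lt J J'
      · have : {v | ψ v J' → (J = J' ∨ lt J J')} = Set.univ := by ext v; simp [hc]
        rw [this]; exact MeasurableSet.univ
      · have : {v | ψ v J' → (J = J' ∨ lt J J')} = {v | ψ v J'}ᶜ := by ext v; simp [hc]
        rw [this]; exact (hmψ J').compl
    have hψc : ∀ (ω : Ω) (J' : Finset (Fin k)),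
        ψ (fun i : ↥T => Z i ω) J' ↔ Covers Z f α τ n ω J' := by
      intro ω J'
      rw [hCovers]
      simp only [hψ]
      rw [Finset.sum_coe_sort T (fun i => g J' (Z i ω))]
    have hpreS : {ω | Z 0 ω ∈ A J} = (fun ω (i : ↥S) => Z i ω) ⁻¹' BS := rfl
    have hpreT : {ω | Jn n ω = some J} = (fun ω (i : ↥T) => Z i ω) ⁻¹' BT := by
      ext ω
      simp only [Set.mem_setOf_eq, Set.mem_preimage, hJn n ω J, hBT]
      constructor
      · rintro ⟨h1, h2⟩
        exact ⟨(hψc ω J).mpr h1, fun J' hJ' => h2 J' ((hψc ω J').mp hJ')⟩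
      · rintro ⟨h1, h2⟩
        exact ⟨(hψc ω J).mp h1, fun J' hJ' => h2 J' ((hψc ω J').mpr hJ')⟩
    rw [hpreS, hpreT, hIF.measure_inter_preimage_eq_mul _ _ hmBS hmBT]
    congr 1
    have : (fun ω (i : ↥S) => Z i ω) ⁻¹' BS = Z 0 ⁻¹' (A J) := rfl
    rw [this, ← hlaw 0, Measure.map_apply (hZmeas 0) (hmeasA J)]
  -- decomposition of the target event
  have hdisj : ∀ n : ℕ, (Set.univ : Set (Finset (Fin k))).PairwiseDisjoint
      (fun J => {ω | Jn n ω = some J} ∩ {ω | Z 0 ω ∈ A J}) := by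
    intro n J _ J' _ hne
    refine Set.disjoint_left.mpr fun ω hω hω' => hne ?_
    have h1 : Jn n ω = some J := hω.1
    have h2 : Jn n ω = some J' := hω'.1
    rw [h1] at h2
    exact Option.some_injective _ h2
  have hkey : ∀ n : ℕ, Pr {ω | ∃ J, Jn n ω = some J ∧
      ∃ j ∈ J, τ < IoU (Z 0 ω).2 (f (Z 0 ω).1 j)} =
      ∑ J : Finset (Fin k), Pr {ω | Jn n ω = some J} * P (A J) := by
    intro n
    have hE : {ω | ∃ J, Jn n ω = some J ∧
        ∃ j ∈ J, τ < IoU (Z 0 ω).2 (f (Z 0 ω).1 j)} =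
        ⋃ J ∈ (Finset.univ : Finset (Finset (Fin k))),
          ({ω | Jn n ω = some J} ∩ {ω | Z 0 ω ∈ A J}) := by
      ext ω
      simp only [Set.mem_setOf_eq, Set.mem_iUnion, Set.mem_inter_iff, Finset.mem_univ,
        exists_true_left, true_and]
      rfl
    rw [hE, measure_biUnion_finset (by simpa using hdisj n)
      (fun J _ => (hmJn n J).inter (hmZ0 J))]
    refine Finset.sum_congr rfl fun J _ => ?_
    rw [Set.inter_comm, hindepJ n J, mul_comm]
  -- real-valued quantities
  set r : ℕ → Finset (Fin k) → ℝ := fun n J => (Pr {ω | Jn n ω = some J}).toReal with hrdef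
  set p : Finset (Fin k) → ℝ := fun J => (P (A J)).toReal with hpdef
  set t : ℕ → ℝ := fun n => (Pr {ω | Jn n ω = none}).toReal with htdef
  have hPrE : ∀ n : ℕ, (Pr {ω | ∃ J, Jn n ω = some J ∧
      ∃ j ∈ J, τ < IoU (Z 0 ω).2 (f (Z 0 ω).1 j)}).toReal =
      ∑ J : Finset (Fin k), r n J * p J := by
    intro n
    rw [hkey n, ENNReal.toReal_sum (fun J _ =>
      ENNReal.mul_ne_top (measure_ne_top _ _) (measure_ne_top _ _))]
    exact Finset.sum_congr rfl fun J _ => ENNReal.toReal_mul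
  -- the sum of the probabilities of the outputs
  have hsum1 : ∀ n : ℕ, ∑ J : Finset (Fin k), r n J = 1 - t n := by
    intro n
    have hmU : MeasurableSet (⋃ J ∈ (Finset.univ : Finset (Finset (Fin k))),
        {ω | Jn n ω = some J}) :=
      MeasurableSet.biUnion (Set.to_countable _) (fun J _ => hmJn n J)
    have hdisj' : (Set.univ : Set (Finset (Fin k))).PairwiseDisjoint
        (fun J => {ω | Jn n ω = some J}) := by
      intro J _ J' _ hne
      refine Set.disjoint_left.mpr fun ω hω hω' => hne ?_
      rw [Set.mem_setOf_eq] at hω hω'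
      rw [hω] at hω'
      exact Option.some_injective _ hω'
    have hU : Pr (⋃ J ∈ (Finset.univ : Finset (Finset (Fin k))), {ω | Jn n ω = some J}) =
        ∑ J : Finset (Fin k), Pr {ω | Jn n ω = some J} :=
      measure_biUnion_finset (by simpa using hdisj') (fun J _ => hmJn n J)
    have hcompl : {ω | Jn n ω = none} =
        (⋃ J ∈ (Finset.univ : Finset (Finset (Fin k))), {ω | Jn n ω = some J})ᶜ := by
      ext ω
      cases h : Jn n ω <;> simp [h]
    have hadd : Pr (⋃ J ∈ (Finset.univ : Finset (Finset (Fin k))), {ω | Jn n ω = some J}) +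
        Pr {ω | Jn n ω = none} = 1 := by
      rw [hcompl, measure_add_measure_compl hmU, measure_univ]
    have hreal : (∑ J : Finset (Fin k), r n J) + t n = 1 := by
      have := congrArg ENNReal.toReal hadd
      rw [ENNReal.toReal_add (by rw [hU]; exact (ENNReal.sum_lt_top.mpr
        (fun J _ => measure_lt_top _ _)).ne) (measure_ne_top _ _)] at this
      rw [hU, ENNReal.toReal_sum (fun J _ => measure_ne_top _ _)] at this
      simpa using this
    linarith
  -- bounding the bad events
  have hnone_subset : ∀ n : ℕ, {ω | Jn n ω = none} ⊆
      {ω | ¬ Covers Z f α τ n ω Finset.univ} := by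
    intro n ω hω hcov
    obtain ⟨J₀, hJ₀, hmin⟩ := aux_exists_least lt hlto
      (fun J => Covers Z f α τ n ω J) ⟨Finset.univ, hcov⟩
    have hsome := (hJn n ω J₀).mpr ⟨hJ₀, hmin⟩
    rw [Set.mem_setOf_eq] at hω
    rw [hω] at hsome
    cases hsome
  have hJn_subset : ∀ (n : ℕ) (J : Finset (Fin k)), {ω | Jn n ω = some J} ⊆
      {ω | Covers Z f α τ n ω J} :=
    fun n J ω hω => ((hJn n ω J).mp hω).1
  have htReal : ∀ {C : ℕ → Set Ω}, Tendsto (fun n => Pr (C n)) atTop (𝓝 0) →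
      Tendsto (fun n => (Pr (C n)).toReal) atTop (𝓝 0) := by
    intro C h
    have := (ENNReal.tendsto_toReal (by simp : (0:ENNReal) ≠ ⊤)).comp h
    exact this
  have ht0 : Tendsto t atTop (𝓝 0) := by
    refine squeeze_zero (fun n => ENNReal.toReal_nonneg) (fun n =>
      ENNReal.toReal_mono (measure_ne_top _ _) (measure_mono (hnone_subset n))) ?_
    exact htReal hgood
  set Bset : Finset (Finset (Fin k)) := Finset.univ.filter (fun J => p J < 1 - α) with hBsetdef
  set u : ℕ → ℝ := fun n => ∑ J ∈ Bset, r n J with hudef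
  have hu0 : Tendsto u atTop (𝓝 0) := by
    have : Tendsto u atTop (𝓝 (∑ J ∈ Bset, (0:ℝ))) := by
      refine tendsto_finset_sum _ fun J hJ => ?_
      have hpJ : p J < 1 - α := (Finset.mem_filter.mp hJ).2
      refine squeeze_zero (fun n => ENNReal.toReal_nonneg) (fun n =>
        ENNReal.toReal_mono (measure_ne_top _ _) (measure_mono (hJn_subset n J))) ?_
      exact htReal (hbad J hpJ)
    simpa using this
  -- the lower bound
  have hge : ∀ n : ℕ, (1 - α) * (1 - t n - u n) ≤
      ∑ J : Finset (Fin k), r n J * p J := by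
    intro n
    have hrnonneg : ∀ J, 0 ≤ r n J := fun J => ENNReal.toReal_nonneg
    have hpnonneg : ∀ J, 0 ≤ p J := fun J => ENNReal.toReal_nonneg
    have h1 : ∑ J ∈ Finset.univ.filter (fun J => ¬ p J < 1 - α), r n J * p J ≤
        ∑ J : Finset (Fin k), r n J * p J :=
      Finset.sum_le_sum_of_subset_of_nonneg (Finset.filter_subset _ _)
        (fun J _ _ => mul_nonneg (hrnonneg J) (hpnonneg J))
    have h2 : ∑ J ∈ Finset.univ.filter (fun J => ¬ p J < 1 - α), r n J * (1 - α) ≤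
        ∑ J ∈ Finset.univ.filter (fun J => ¬ p J < 1 - α), r n J * p J := by
      refine Finset.sum_le_sum fun J hJ => ?_
      have : 1 - α ≤ p J := not_lt.mp (Finset.mem_filter.mp hJ).2
      exact mul_le_mul_of_nonneg_left this (hrnonneg J)
    have h3 : ∑ J ∈ Finset.univ.filter (fun J => ¬ p J < 1 - α), r n J =
        (1 - t n) - u n := by
      have hsplit := Finset.sum_filter_add_sum_filter_not Finset.univ
        (fun J => p J < 1 - α) (fun J => r n J)
      rw [hsum1 n] at hsplit
      simp only [hudef, hBsetdef] at *
      linarith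
    calc (1 - α) * (1 - t n - u n)
        = ∑ J ∈ Finset.univ.filter (fun J => ¬ p J < 1 - α), r n J * (1 - α) := by
          rw [← Finset.sum_mul, h3]; ring
      _ ≤ ∑ J ∈ Finset.univ.filter (fun J => ¬ p J < 1 - α), r n J * p J := h2
      _ ≤ ∑ J : Finset (Fin k), r n J * p J := h1
  have hb : Tendsto (fun n => (1 - α) * (1 - t n - u n)) atTop (𝓝 (1 - α)) := by
    have h1 : Tendsto (fun n => 1 - t n - u n) atTop (𝓝 1) := by
      have := (tendsto_const_nhds (x := (1:ℝ)) (f := atTop)).sub ht0 |>.sub hu0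
      simpa using this
    have := (tendsto_const_nhds (x := (1 - α)) (f := atTop)).mul h1
    simpa using this
  calc 1 - α = liminf (fun n => (1 - α) * (1 - t n - u n)) atTop := hb.liminf_eq.symm
    _ ≤ liminf (fun n : ℕ =>
        (Pr {ω | ∃ J, Jn n ω = some J ∧
          ∃ j ∈ J, τ < IoU (Z 0 ω).2 (f (Z 0 ω).1 j)}).toReal) atTop := by
      refine liminf_le_liminf (Eventually.of_forall fun n => ?_)
        hb.isBoundedUnder_ge
        ((isBoundedUnder_of ⟨1, fun n => ?_⟩).isCoboundedUnder_ge)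
      · rw [hPrE n]
        exact hge n
      · calc (Pr _).toReal ≤ (1 : ENNReal).toReal :=
            ENNReal.toReal_mono (by simp) prob_le_one
          _ = 1 := by simp
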